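/- Let m ≥ 1, l₁,…,l_m > 0, L a hermitian endomorphism of ℂ^{2m}, and G(l) the block matrix [[D^{-1}, −D^{-1}],[−D^{-1}, D^{-1}]] with D = diag(l₁,…,l_m). Let L⁺ be the Moore–Penrose pseudo-inverse of L. Then all eigenvalues of L⁺ G(l) are real. Moreover, if every positive eigenvalue λ of L satisfies λ > 2/min_e l_e, then every eigenvalue τ of L⁺ G(l) satisfies τ < 1. -/

import Mathlib

open Matrix

/-- The block matrix G(l) = [[D⁻¹, −D⁻¹],[−D⁻¹, D⁻¹]] with D = diag(l₁,…,l_m). -/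
noncomputable def Gmat (m : ℕ) (l : Fin m → ℝ) :
    Matrix (Fin m ⊕ Fin m) (Fin m ⊕ Fin m) ℂ :=
  Matrix.of fun i j =>
    match i, j with
    | Sum.inl a, Sum.inl b => if a = b then ((l a : ℂ))⁻¹ else 0
    | Sum.inl a, Sum.inr b => if a = b then -((l a : ℂ))⁻¹ else 0
    | Sum.inr a, Sum.inl b => if a = b then -((l a : ℂ))⁻¹ else 0
    | Sum.inr a, Sum.inr b => if a = b then ((l a : ℂ))⁻¹ else 0

/-- G(l) as a linear operator on the Euclidean space ℂ^{2m}. -/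
noncomputable def Glin (m : ℕ) (l : Fin m → ℝ) :
    EuclideanSpace ℂ (Fin m ⊕ Fin m) →ₗ[ℂ] EuclideanSpace ℂ (Fin m ⊕ Fin m) :=
  Matrix.toEuclideanLin (Gmat m l)

lemma Glin_apply {m : ℕ} (l : Fin m → ℝ) (v : EuclideanSpace ℂ (Fin m ⊕ Fin m))
    (i : Fin m ⊕ Fin m) : Glin m l v i = ∑ j, Gmat m l i j * v j := rfl

lemma Glin_apply_inl {m : ℕ} (l : Fin m → ℝ) (v : EuclideanSpace ℂ (Fin m ⊕ Fin m)) (a : Fin m) :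
    Glin m l v (Sum.inl a) = ((l a : ℂ))⁻¹ * (v (Sum.inl a) - v (Sum.inr a)) := by
  rw [Glin_apply]
  simp [Fintype.sum_sum_type, Gmat, Matrix.of_apply, ite_mul, Finset.sum_ite_eq]
  ring

lemma Glin_apply_inr {m : ℕ} (l : Fin m → ℝ) (v : EuclideanSpace ℂ (Fin m ⊕ Fin m)) (a : Fin m) :
    Glin m l v (Sum.inr a) = ((l a : ℂ))⁻¹ * (v (Sum.inr a) - v (Sum.inl a)) := by
  rw [Glin_apply]
  simp [Fintype.sum_sum_type, Gmat, Matrix.of_apply, ite_mul, Finset.sum_ite_eq]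
  ring

lemma inner_G {m : ℕ} (l : Fin m → ℝ) (v : EuclideanSpace ℂ (Fin m ⊕ Fin m)) :
    (inner ℂ v (Glin m l v) : ℂ) =
      ((∑ a, (l a)⁻¹ * Complex.normSq (v (Sum.inl a) - v (Sum.inr a)) : ℝ) : ℂ) := by
  rw [PiLp.inner_apply, Fintype.sum_sum_type]
  push_cast
  rw [← Finset.sum_add_distrib]
  refine Finset.sum_congr rfl fun a _ => ?_
  simp only [RCLike.inner_apply, Glin_apply_inl, Glin_apply_inr]
  rw [Complex.normSq_eq_conj_mul_self, map_sub]
  ring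

lemma inner_GG {m : ℕ} (l : Fin m → ℝ) (v : EuclideanSpace ℂ (Fin m ⊕ Fin m)) :
    (inner ℂ (Glin m l v) (Glin m l v) : ℂ) =
      ((∑ a, 2 * ((l a)⁻¹)^2 * Complex.normSq (v (Sum.inl a) - v (Sum.inr a)) : ℝ) : ℂ) := by
  rw [PiLp.inner_apply, Fintype.sum_sum_type]
  push_cast
  rw [← Finset.sum_add_distrib]
  refine Finset.sum_congr rfl fun a _ => ?_
  simp only [RCLike.inner_apply, Glin_apply_inl, Glin_apply_inr]
  rw [Complex.normSq_eq_conj_mul_self, map_sub]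
  rw [map_mul (starRingEnd ℂ), map_mul (starRingEnd ℂ), map_sub, map_sub, Complex.conj_inv,
    Complex.conj_ofReal]
  ring

lemma aux_G_zero {m : ℕ} {l : Fin m → ℝ} (hl : ∀ i, 0 < l i)
    (v : EuclideanSpace ℂ (Fin m ⊕ Fin m))
    (h0 : ∑ a, (l a)⁻¹ * Complex.normSq (v (Sum.inl a) - v (Sum.inr a)) = 0) :
    Glin m l v = 0 := by
  have hall := (Finset.sum_eq_zero_iff_of_nonneg (fun a _ =>
    mul_nonneg (le_of_lt (inv_pos.mpr (hl a))) (Complex.normSq_nonneg _))).mp h0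
  have hd : ∀ a, v (Sum.inl a) - v (Sum.inr a) = 0 := by
    intro a
    have h1 := hall a (Finset.mem_univ a)
    have hla : (l a)⁻¹ ≠ 0 := ne_of_gt (inv_pos.mpr (hl a))
    rcases mul_eq_zero.mp h1 with h | h
    · exact absurd h hla
    · exact Complex.normSq_eq_zero.mp h
  ext i
  cases i with
  | inl a =>
    rw [Glin_apply_inl, hd a, mul_zero]; rfl
  | inr a =>
    rw [Glin_apply_inr]
    have : v (Sum.inr a) - v (Sum.inl a) = 0 := by rw [← neg_sub, hd a, neg_zero]
    rw [this, mul_zero]; rfl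

section LpFacts
variable {E : Type*} [NormedAddCommGroup E] [InnerProductSpace ℂ E] [FiniteDimensional ℂ E]
variable (L Lp : E →ₗ[ℂ] E)

omit [FiniteDimensional ℂ E] in
lemma aux_mem_orth (hL : L.IsSymmetric) (x : E) : L x ∈ (LinearMap.ker L)ᗮ := by
  intro y hy
  rw [← hL y x, LinearMap.mem_ker.mp hy, inner_zero_left]

omit [FiniteDimensional ℂ E] in
lemma aux_zero_of_mem_both {x : E} (h1 : x ∈ LinearMap.ker L) (h2 : x ∈ (LinearMap.ker L)ᗮ) :
    x = 0 := by
  have := h2 x h1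
  rwa [inner_self_eq_zero] at this

lemma aux_range (hL : L.IsSymmetric) :
    ∀ z ∈ (LinearMap.ker L)ᗮ, ∃ a ∈ (LinearMap.ker L)ᗮ, L a = z := by
  set K := (LinearMap.ker L)ᗮ
  let L' : K →ₗ[ℂ] K := L.restrict (fun x _ => aux_mem_orth L hL x)
  have hinj : Function.Injective L' := by
    rw [← LinearMap.ker_eq_bot, Submodule.eq_bot_iff]
    intro x hx
    have hx0 : L (x : E) = 0 := by
      have := congrArg Subtype.val (LinearMap.mem_ker.mp hx)
      simpa [L', LinearMap.restrict_apply] using this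
    have : (x : E) = 0 := aux_zero_of_mem_both L (LinearMap.mem_ker.mpr hx0) x.2
    exact Subtype.ext this
  have hsurj := LinearMap.injective_iff_surjective.mp hinj
  intro z hz
  obtain ⟨a, ha⟩ := hsurj ⟨z, hz⟩
  exact ⟨a, a.2, congrArg Subtype.val ha⟩

lemma aux_Lp_eq (hL : L.IsSymmetric)
    (hLp0 : ∀ v ∈ LinearMap.ker L, Lp v = 0)
    (hLpinv : ∀ v ∈ (LinearMap.ker L)ᗮ, Lp (L v) = v) (x : E) :
    ∃ a ∈ (LinearMap.ker L)ᗮ, Lp x = a ∧ x - L a ∈ LinearMap.ker L := by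
  obtain ⟨y, hy, z, hz, rfl⟩ :=
    Submodule.exists_add_mem_mem_orthogonal (K := LinearMap.ker L) x
  obtain ⟨a, haK, haz⟩ := aux_range L hL z hz
  refine ⟨a, haK, ?_, ?_⟩
  · rw [map_add, hLp0 y hy, zero_add, ← haz, hLpinv a haK]
  · simpa [← haz] using hy

lemma aux_Lp_symm (hL : L.IsSymmetric)
    (hLp0 : ∀ v ∈ LinearMap.ker L, Lp v = 0)
    (hLpinv : ∀ v ∈ (LinearMap.ker L)ᗮ, Lp (L v) = v) : Lp.IsSymmetric := by
  intro x w
  obtain ⟨a, haK, hax, hxk⟩ := aux_Lp_eq L Lp hL hLp0 hLpinv x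
  obtain ⟨b, hbK, hbw, hwk⟩ := aux_Lp_eq L Lp hL hLp0 hLpinv w
  rw [hax, hbw]
  have h1 : (inner ℂ a w : ℂ) = inner ℂ (L a) b := by
    have hw' : w = (w - L b) + L b := (sub_add_cancel w (L b)).symm
    rw [hw', inner_add_right, Submodule.inner_left_of_mem_orthogonal hwk haK, zero_add,
      hL a b]
  have h2 : (inner ℂ x b : ℂ) = inner ℂ (L a) b := by
    have hx' : x = (x - L a) + L a := (sub_add_cancel x (L a)).symm
    rw [hx', inner_add_left, Submodule.inner_right_of_mem_orthogonal hxk hbK, zero_add]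
  rw [h1, h2]

lemma aux_eig_bound (hL : L.IsSymmetric)
    (hLp0 : ∀ v ∈ LinearMap.ker L, Lp v = 0)
    (hLpinv : ∀ v ∈ (LinearMap.ker L)ᗮ, Lp (L v) = v)
    {c : ℝ} (hc : 0 < c)
    (hspec : ∀ μ ∈ spectrum ℂ L, 0 < μ.re → 2 / c < μ.re)
    (μ : ℝ) (hμ : Module.End.HasEigenvalue Lp (μ : ℂ)) : μ < c / 2 := by
  rcases le_or_gt μ 0 with h | h
  · linarith
  obtain ⟨u, hu⟩ := hμ.exists_hasEigenvector
  have huLp : Lp u = (μ : ℂ) • u := Module.End.mem_eigenspace_iff.mp hu.1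
  have hune : u ≠ 0 := hu.2
  obtain ⟨a, haK, hau, huk⟩ := aux_Lp_eq L Lp hL hLp0 hLpinv u
  have hμC : (μ : ℂ) ≠ 0 := by exact_mod_cast ne_of_gt h
  have hua : a = (μ : ℂ) • u := by rw [← hau, huLp]
  have huK : u ∈ (LinearMap.ker L)ᗮ := by
    have hu' : u = (μ : ℂ)⁻¹ • a := by
      rw [hua, smul_smul, inv_mul_cancel₀ hμC, one_smul]
    rw [hu']; exact Submodule.smul_mem _ _ haK
  have h0 : u - L a = 0 :=
    aux_zero_of_mem_both L huk (Submodule.sub_mem _ huK (aux_mem_orth L hL a))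
  have h1 : u = L a := by rwa [sub_eq_zero] at h0
  have h2 : u = (μ : ℂ) • L u := by
    conv_lhs => rw [h1, hua]
    rw [LinearMap.map_smul]
  have hLu : L u = (μ : ℂ)⁻¹ • u := by
    calc L u = (μ : ℂ)⁻¹ • ((μ : ℂ) • L u) := by
          rw [smul_smul, inv_mul_cancel₀ hμC, one_smul]
    _ = (μ : ℂ)⁻¹ • u := by rw [← h2]
  have hEig : Module.End.HasEigenvalue L ((μ : ℂ)⁻¹) :=
    Module.End.hasEigenvalue_of_hasEigenvector
      ⟨Module.End.mem_eigenspace_iff.mpr hLu, hune⟩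
  have hmem := hEig.mem_spectrum
  have hre : ((μ : ℂ)⁻¹).re = μ⁻¹ := by
    rw [← Complex.ofReal_inv, Complex.ofReal_re]
  have hgt := hspec _ hmem (by rw [hre]; positivity)
  rw [hre, div_lt_iff₀ hc] at hgt
  have h2' : μ * 2 < μ * (μ⁻¹ * c) := mul_lt_mul_of_pos_left hgt h
  rw [← mul_assoc, mul_inv_cancel₀ (ne_of_gt h), one_mul] at h2'
  linarith

lemma aux_quad {c : ℝ} (hsym : Lp.IsSymmetric)
    (heig : ∀ μ : ℝ, Module.End.HasEigenvalue Lp (μ : ℂ) → μ < c / 2)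
    (w : E) (hw : w ≠ 0) : (inner ℂ w (Lp w) : ℂ).re < c / 2 * ‖w‖ ^ 2 := by
  set n := Module.finrank ℂ E with hn'
  have hn : Module.finrank ℂ E = n := rfl
  set B := hsym.eigenvectorBasis hn with hBdef
  set μ := hsym.eigenvalues hn with hμdef
  have hB : ∀ i, B.repr (Lp w) i = (μ i : ℂ) * B.repr w i := fun i =>
    hsym.eigenvectorBasis_apply_self_apply hn w i
  have hinner : (inner ℂ w (Lp w) : ℂ) = inner ℂ (B.repr w) (B.repr (Lp w)) :=
    (B.repr.inner_map_map w (Lp w)).symm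
  rw [hinner, PiLp.inner_apply]
  have hterm : ∀ i, (inner ℂ (B.repr w i) (B.repr (Lp w) i) : ℂ)
      = ((μ i * Complex.normSq (B.repr w i) : ℝ) : ℂ) := by
    intro i
    rw [RCLike.inner_apply, hB i, Complex.ofReal_mul, Complex.normSq_eq_conj_mul_self]
    ring
  rw [Finset.sum_congr rfl (fun i _ => hterm i), ← Complex.ofReal_sum, Complex.ofReal_re]
  have hnormsum : ∑ i, Complex.normSq (B.repr w i) = ‖w‖ ^ 2 := by
    have h1 : ‖B.repr w‖ = ‖w‖ := B.repr.norm_map w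
    rw [← h1, EuclideanSpace.norm_eq, Real.sq_sqrt (by positivity)]
    exact Finset.sum_congr rfl fun i _ => by
      rw [Complex.normSq_eq_norm_sq]
  calc ∑ i, μ i * Complex.normSq (B.repr w i)
      < ∑ i, c / 2 * Complex.normSq (B.repr w i) := by
        apply Finset.sum_lt_sum
        · intro i _
          exact mul_le_mul_of_nonneg_right
            (le_of_lt (heig (μ i) (by exact_mod_cast hsym.hasEigenvalue_eigenvalues hn i)))
            (Complex.normSq_nonneg _)
        · have hex : ∃ i, B.repr w i ≠ 0 := by
            by_contra hcon
            push_neg at hcon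
            apply hw
            have h0 : B.repr w = 0 := by ext i; exact hcon i
            exact B.repr.map_eq_zero_iff.mp h0
          obtain ⟨i, hi⟩ := hex
          exact ⟨i, Finset.mem_univ i,
            mul_lt_mul_of_pos_right (heig (μ i)
              (by exact_mod_cast hsym.hasEigenvalue_eigenvalues hn i))
              (Complex.normSq_pos.mpr hi)⟩
    _ = c / 2 * ‖w‖ ^ 2 := by rw [← Finset.mul_sum, hnormsum]
end LpFacts

theorem stmt10 {m : ℕ} (hm : 0 < m) (l : Fin m → ℝ) (hl : ∀ i, 0 < l i)
    (L Lp : EuclideanSpace ℂ (Fin m ⊕ Fin m) →ₗ[ℂ] EuclideanSpace ℂ (Fin m ⊕ Fin m))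
    (hL : L.IsSymmetric)
    (hLp0 : ∀ v ∈ LinearMap.ker L, Lp v = 0)
    (hLpinv : ∀ v ∈ (LinearMap.ker L)ᗮ, Lp (L v) = v) :
    (∀ τ ∈ spectrum ℂ (Lp ∘ₗ Glin m l), τ.im = 0) ∧
    ((∀ μ ∈ spectrum ℂ L, 0 < μ.re → ∀ e : Fin m, 2 / l e < μ.re) →
      ∀ τ ∈ spectrum ℂ (Lp ∘ₗ Glin m l), τ.re < 1) := by
  have hLpsym := aux_Lp_symm L Lp hL hLp0 hLpinv
  have key : ∀ τ ∈ spectrum ℂ (Lp ∘ₗ Glin m l),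
      ∃ v : EuclideanSpace ℂ (Fin m ⊕ Fin m), v ≠ 0 ∧ Lp (Glin m l v) = τ • v := by
    intro τ hτ
    have hev : Module.End.HasEigenvalue (Lp ∘ₗ Glin m l) τ :=
      Module.End.hasEigenvalue_iff_mem_spectrum.mpr hτ
    obtain ⟨v, hv⟩ := hev.exists_hasEigenvector
    refine ⟨v, hv.2, ?_⟩
    have := Module.End.mem_eigenspace_iff.mp hv.1
    simpa using this
  -- the scalar product identity for an eigenvector
  have hsr : ∀ (τ : ℂ) (v : EuclideanSpace ℂ (Fin m ⊕ Fin m)),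
      Lp (Glin m l v) = τ • v →
      (inner ℂ (Glin m l v) (Lp (Glin m l v)) : ℂ) =
        τ * ((∑ a, (l a)⁻¹ * Complex.normSq (v (Sum.inl a) - v (Sum.inr a)) : ℝ) : ℂ) := by
    intro τ v hv
    rw [hv, inner_smul_right]
    congr 1
    rw [← inner_conj_symm, inner_G, Complex.conj_ofReal]
  have hsreal : ∀ w : EuclideanSpace ℂ (Fin m ⊕ Fin m),
      (inner ℂ w (Lp w) : ℂ) = (((inner ℂ w (Lp w) : ℂ).re : ℝ) : ℂ) := by
    intro w
    have hconj : (starRingEnd ℂ) (inner ℂ w (Lp w) : ℂ) = inner ℂ w (Lp w) := by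
      rw [inner_conj_symm]; exact hLpsym w w
    exact (Complex.conj_eq_iff_re.mp hconj).symm
  have him : ∀ τ ∈ spectrum ℂ (Lp ∘ₗ Glin m l), τ.im = 0 := by
    intro τ hτ
    obtain ⟨v, hv0, hv⟩ := key τ hτ
    set r : ℝ := ∑ a, (l a)⁻¹ * Complex.normSq (v (Sum.inl a) - v (Sum.inr a)) with hrdef
    by_cases hr0 : r = 0
    · have hw0 : Glin m l v = 0 := aux_G_zero hl v hr0
      have hz : τ • v = 0 := by rw [← hv, hw0, map_zero]
      rcases smul_eq_zero.mp hz with h | h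
      · rw [h]; rfl
      · exact absurd h hv0
    · have h1 := hsr τ v hv
      have hrC : (r : ℂ) ≠ 0 := by exact_mod_cast hr0
      have h2 : τ * (r : ℂ)
          = (((inner ℂ (Glin m l v) (Lp (Glin m l v)) : ℂ).re : ℝ) : ℂ) := by
        rw [← hsreal (Glin m l v)]
        exact h1.symm
      have hτeq : τ = (((inner ℂ (Glin m l v) (Lp (Glin m l v)) : ℂ).re / r : ℝ) : ℂ) := by
        rw [Complex.ofReal_div, eq_div_iff hrC]
        exact h2
      rw [hτeq, Complex.ofReal_im]
  refine ⟨him, ?_⟩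
  intro hspec τ hτ
  obtain ⟨e₀, -, he₀⟩ := Finset.exists_min_image Finset.univ l ⟨⟨0, hm⟩, Finset.mem_univ _⟩
  set c := l e₀ with hcdef
  have hc : 0 < c := hl e₀
  have hspec' : ∀ μ ∈ spectrum ℂ L, 0 < μ.re → 2 / c < μ.re := fun μ hμ h0 => hspec μ hμ h0 e₀
  have heig := aux_eig_bound L Lp hL hLp0 hLpinv hc hspec'
  have hquad := aux_quad Lp hLpsym heig
  obtain ⟨v, hv0, hv⟩ := key τ hτ
  have him0 : τ.im = 0 := him τ hτ
  by_cases hw0 : Glin m l v = 0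
  · have hz : τ • v = 0 := by rw [← hv, hw0, map_zero]
    rcases smul_eq_zero.mp hz with h | h
    · rw [h]; norm_num
    · exact absurd h hv0
  set r : ℝ := ∑ a, (l a)⁻¹ * Complex.normSq (v (Sum.inl a) - v (Sum.inr a)) with hrdef
  have hrnonneg : 0 ≤ r := Finset.sum_nonneg fun a _ =>
    mul_nonneg (le_of_lt (inv_pos.mpr (hl a))) (Complex.normSq_nonneg _)
  have hrne : r ≠ 0 := fun h0 => hw0 (aux_G_zero hl v h0)
  have hrpos : 0 < r := lt_of_le_of_ne hrnonneg (Ne.symm hrne)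
  -- norm bound
  have hnw : ‖Glin m l v‖ ^ 2 ≤ 2 / c * r := by
    have h1 := inner_GG l v
    have h3 := norm_sq_eq_re_inner (𝕜 := ℂ) (Glin m l v)
    rw [h1] at h3
    have h2 : ‖Glin m l v‖ ^ 2
        = ∑ a, 2 * ((l a)⁻¹)^2 * Complex.normSq (v (Sum.inl a) - v (Sum.inr a)) := by
      rw [h3, RCLike.re_to_complex, Complex.ofReal_re]
    rw [h2, hrdef, Finset.mul_sum]
    apply Finset.sum_le_sum
    intro a _
    have hla := hl a
    have hle := he₀ a (Finset.mem_univ a)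
    have hinv : (l a)⁻¹ ≤ c⁻¹ := by
      rw [inv_le_inv₀ (hl a) hc]
      exact hle
    have hn0 : 0 ≤ Complex.normSq (v (Sum.inl a) - v (Sum.inr a)) := Complex.normSq_nonneg _
    rw [div_eq_mul_inv]
    nlinarith [mul_le_mul_of_nonneg_right hinv
      (mul_nonneg (inv_pos.mpr hla).le hn0)]
  have hqb := hquad (Glin m l v) hw0
  have h1 := hsr τ v hv
  have hre : τ.re * r = (inner ℂ (Glin m l v) (Lp (Glin m l v)) : ℂ).re := by
    rw [h1]
    simp [Complex.mul_re, him0]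
    exact Or.inl hrdef
  have hfin : τ.re * r < r := by
    calc τ.re * r = (inner ℂ (Glin m l v) (Lp (Glin m l v)) : ℂ).re := hre
    _ < c / 2 * ‖Glin m l v‖ ^ 2 := hqb
    _ ≤ c / 2 * (2 / c * r) := by
        apply mul_le_mul_of_nonneg_left hnw (by positivity)
    _ = r := by field_simp
  nlinarith [hrpos]
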